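/- Data augmentation hurts minimum ℓ1-norm interpolation by a factor (p−ε)/ε: let d ≥ 1 be an integer, 0 < δ < 1, and 0 < ε < p < 1. Set x₁ = (1+δ,1,0), x₂ = (0,1,1+δ), x₃ = (1+δ,0,1) in ℝ³, and let x̃ᵢ ∈ ℝ^{3d} be the d-fold concatenation of xᵢ. Let θ⋆ = (1,...,1) ∈ ℝ^{3d}, let θ̂_std ∈ ℝ^{3d} be the d-fold concatenation of ((2+δ)/(1+δ), 0, 0), and let θ̂_aug ∈ ℝ^{3d} be the d-fold concatenation of (0, 2+δ, 0). Then θ̂_std is a minimum ℓ1-norm solution of x̃₁ᵀθ = x̃₁ᵀθ⋆, θ̂_aug is a minimum ℓ1-norm solution of {x̃₁ᵀθ = x̃₁ᵀθ⋆, x̃₂ᵀθ = x̃₂ᵀθ⋆}, and for the random input X̃ equal to x̃₁ with probability 1−p, x̃₂ with probability ε, and x̃₃ with probability p−ε: E[(X̃ᵀθ̂_std − X̃ᵀθ⋆)²] = ε d² (2+δ)² and E[(X̃ᵀθ̂_aug − X̃ᵀθ⋆)²] = (p−ε) d² (2+δ)², so the ratio of the augmented to the standard error is (p−ε)/ε (which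 equals d−1 when p = 1/d² and ε = 1/d³). -/

import Mathlib

open Matrix BigOperators

/-- Standard (population) error of `θ` w.r.t. covariance `S` and true parameter `θstar`:
`(θ − θ⋆)ᵀ Σ (θ − θ⋆)`. -/
def Lstd {d : ℕ} (S : Matrix (Fin d) (Fin d) ℝ) (θstar θ : Fin d → ℝ) : ℝ :=
  (θ - θstar) ⬝ᵥ S.mulVec (θ - θstar)

/-- `θ` is the minimum Euclidean-norm solution of the constraint `C`. -/
def IsMinNormInterp {d : ℕ} (C : (Fin d → ℝ) → Prop) (θ : Fin d → ℝ) : Prop :=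
  C θ ∧ ∀ θ', C θ' → θ ⬝ᵥ θ ≤ θ' ⬝ᵥ θ'

/-- `P` is the orthogonal projection matrix onto `Null(X)`:
symmetric, idempotent, range contained in `Null(X)`, and fixing `Null(X)`. -/
def IsOrthProjNull {n d : ℕ} (X : Matrix (Fin n) (Fin d) ℝ)
    (P : Matrix (Fin d) (Fin d) ℝ) : Prop :=
  Pᵀ = P ∧ P * P = P ∧ (∀ v, X.mulVec (P.mulVec v) = 0) ∧
    (∀ v, X.mulVec v = 0 → P.mulVec v = v)

/-- `P` is the orthogonal projection matrix onto `Null(X1) ∩ Null(X2)`. -/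
def IsOrthProjNull2 {n m d : ℕ} (X1 : Matrix (Fin n) (Fin d) ℝ)
    (X2 : Matrix (Fin m) (Fin d) ℝ) (P : Matrix (Fin d) (Fin d) ℝ) : Prop :=
  Pᵀ = P ∧ P * P = P ∧ (∀ v, X1.mulVec (P.mulVec v) = 0 ∧ X2.mulVec (P.mulVec v) = 0) ∧
    (∀ v, X1.mulVec v = 0 → X2.mulVec v = 0 → P.mulVec v = v)

/-- Appendix (minimum ℓ1-norm example), general `d`: with `d`-fold concatenated inputs,
the concatenated estimators are minimum ℓ1-norm interpolants of the respective
constraints, and the standard errors under the three-point input distribution are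
`ε d² (2+δ)²` and `(p−ε) d² (2+δ)²` respectively, with ratio `(p−ε)/ε`. -/
theorem l1_concatenated_errors (d : ℕ) (hd : 1 ≤ d) (δ p ε : ℝ)
    (h0 : 0 < δ) (h1 : δ < 1) (hε : 0 < ε) (hεp : ε < p) (hp : p < 1) :
    let x1 : Fin d × Fin 3 → ℝ := fun q => ![1 + δ, 1, 0] q.2
    let x2 : Fin d × Fin 3 → ℝ := fun q => ![0, 1, 1 + δ] q.2
    let x3 : Fin d × Fin 3 → ℝ := fun q => ![1 + δ, 0, 1] q.2
    let θstar : Fin d × Fin 3 → ℝ := fun _ => 1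
    let θstd : Fin d × Fin 3 → ℝ := fun q => ![(2 + δ) / (1 + δ), 0, 0] q.2
    let θaug : Fin d × Fin 3 → ℝ := fun q => ![0, 2 + δ, 0] q.2
    let l1 : (Fin d × Fin 3 → ℝ) → ℝ := fun θ => ∑ i, |θ i|
    let E : (Fin d × Fin 3 → ℝ) → ℝ := fun θ =>
      (1 - p) * (x1 ⬝ᵥ θ - x1 ⬝ᵥ θstar) ^ 2 + ε * (x2 ⬝ᵥ θ - x2 ⬝ᵥ θstar) ^ 2 +
        (p - ε) * (x3 ⬝ᵥ θ - x3 ⬝ᵥ θstar) ^ 2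
    (x1 ⬝ᵥ θstd = x1 ⬝ᵥ θstar ∧
        ∀ θ : Fin d × Fin 3 → ℝ, x1 ⬝ᵥ θ = x1 ⬝ᵥ θstar → l1 θstd ≤ l1 θ) ∧
      (x1 ⬝ᵥ θaug = x1 ⬝ᵥ θstar ∧ x2 ⬝ᵥ θaug = x2 ⬝ᵥ θstar ∧
        ∀ θ : Fin d × Fin 3 → ℝ,
          x1 ⬝ᵥ θ = x1 ⬝ᵥ θstar → x2 ⬝ᵥ θ = x2 ⬝ᵥ θstar → l1 θaug ≤ l1 θ) ∧
      E θstd = ε * (d : ℝ) ^ 2 * (2 + δ) ^ 2 ∧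
      E θaug = (p - ε) * (d : ℝ) ^ 2 * (2 + δ) ^ 2 ∧
      E θaug / E θstd = (p - ε) / ε := by
  intro x1 x2 x3 θstar θstd θaug l1 E
  have hδ1 : (0:ℝ) < 1 + δ := by linarith
  have h2δ : (0:ℝ) < 2 + δ := by linarith
  have hdpos : (0:ℝ) < (d:ℝ) := by exact_mod_cast hd
  -- dot products with θstar
  have e1star : x1 ⬝ᵥ θstar = d * (2 + δ) := by
    simp [x1, θstar, dotProduct, Fintype.sum_prod_type, Fin.sum_univ_three]; ring
  have e2star : x2 ⬝ᵥ θstar = d * (2 + δ) := by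
    simp [x2, θstar, dotProduct, Fintype.sum_prod_type, Fin.sum_univ_three]; ring
  have e3star : x3 ⬝ᵥ θstar = d * (2 + δ) := by
    simp [x3, θstar, dotProduct, Fintype.sum_prod_type, Fin.sum_univ_three]; ring
  have e1std : x1 ⬝ᵥ θstd = d * (2 + δ) := by
    simp [x1, θstd, dotProduct, Fintype.sum_prod_type, Fin.sum_univ_three]
    field_simp
    simp
  have e2std : x2 ⬝ᵥ θstd = 0 := by
    simp [x2, θstd, dotProduct, Fintype.sum_prod_type, Fin.sum_univ_three]
  have e3std : x3 ⬝ᵥ θstd = d * (2 + δ) := by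
    simp [x3, θstd, dotProduct, Fintype.sum_prod_type, Fin.sum_univ_three]
    field_simp
    simp
  have e1aug : x1 ⬝ᵥ θaug = d * (2 + δ) := by
    simp [x1, θaug, dotProduct, Fintype.sum_prod_type, Fin.sum_univ_three]; ring
  have e2aug : x2 ⬝ᵥ θaug = d * (2 + δ) := by
    simp [x2, θaug, dotProduct, Fintype.sum_prod_type, Fin.sum_univ_three]; ring
  have e3aug : x3 ⬝ᵥ θaug = 0 := by
    simp [x3, θaug, dotProduct, Fintype.sum_prod_type, Fin.sum_univ_three]
  -- l1 norms of the estimators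
  have l1std : l1 θstd = d * ((2 + δ) / (1 + δ)) := by
    have habs : |(2 + δ) / (1 + δ)| = (2 + δ) / (1 + δ) :=
      abs_of_pos (div_pos h2δ hδ1)
    simp [l1, θstd, Fintype.sum_prod_type, Fin.sum_univ_three, habs]
  have l1aug : l1 θaug = d * (2 + δ) := by
    have habs : |(2 + δ)| = 2 + δ := abs_of_pos h2δ
    simp [l1, θaug, Fintype.sum_prod_type, Fin.sum_univ_three, habs]; ring
  -- key inequalities
  have helper : ∀ a b c : ℝ, 0 ≤ a → a ≤ b → a * c ≤ b * |c| := fun a b c ha hab =>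
    (mul_le_mul_of_nonneg_left (le_abs_self c) ha).trans
      (mul_le_mul_of_nonneg_right hab (abs_nonneg c))
  have hb1 : ∀ j : Fin 3, 0 ≤ ![1 + δ, 1, 0] j ∧ ![1 + δ, 1, 0] j ≤ 1 + δ := by
    intro j; fin_cases j <;> constructor <;> simp <;> linarith
  have hb2 : ∀ j : Fin 3,
      0 ≤ ![1 + δ, 1, 0] j + ![0, 1, 1 + δ] j ∧ ![1 + δ, 1, 0] j + ![0, 1, 1 + δ] j ≤ 2 := by
    intro j; fin_cases j <;> constructor <;> simp <;> linarith
  have key1 : ∀ θ : Fin d × Fin 3 → ℝ, x1 ⬝ᵥ θ ≤ (1 + δ) * l1 θ := by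
    intro θ
    simp only [x1, l1, dotProduct]
    rw [Finset.mul_sum]
    apply Finset.sum_le_sum
    intro q _
    exact helper _ _ _ (hb1 q.2).1 (hb1 q.2).2
  have key2 : ∀ θ : Fin d × Fin 3 → ℝ, x1 ⬝ᵥ θ + x2 ⬝ᵥ θ ≤ 2 * l1 θ := by
    intro θ
    have hsum : x1 ⬝ᵥ θ + x2 ⬝ᵥ θ = ∑ q, (x1 q + x2 q) * θ q := by
      simp [x1, x2, dotProduct, add_mul, Finset.sum_add_distrib]
    rw [hsum]
    simp only [l1]
    rw [Finset.mul_sum]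
    apply Finset.sum_le_sum
    intro q _
    exact helper _ _ _ (hb2 q.2).1 (hb2 q.2).2
  have hEstd : E θstd = ε * (d : ℝ) ^ 2 * (2 + δ) ^ 2 := by
    simp only [E, e1std, e2std, e3std, e1star, e2star, e3star]; ring
  have hEaug : E θaug = (p - ε) * (d : ℝ) ^ 2 * (2 + δ) ^ 2 := by
    simp only [E, e1aug, e2aug, e3aug, e1star, e2star, e3star]; ring
  refine ⟨⟨by rw [e1std, e1star], ?_⟩, ⟨by rw [e1aug, e1star], by rw [e2aug, e2star], ?_⟩,
    hEstd, hEaug, ?_⟩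
  · intro θ hθ
    have h := key1 θ
    rw [hθ, e1star] at h
    rw [l1std]
    rw [show (d:ℝ) * ((2 + δ) / (1 + δ)) = (d * (2 + δ)) / (1 + δ) by ring,
      div_le_iff₀ hδ1]
    nlinarith
  · intro θ hθ1 hθ2
    have h := key2 θ
    rw [hθ1, e1star, hθ2, e2star] at h
    rw [l1aug]; linarith
  · rw [hEstd, hEaug]
    rw [div_eq_div_iff (by positivity) (ne_of_gt hε)]
    ring
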